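/- Let q = 2^h with gcd(i,h) = 1 for positive integers i, h. Then the set O(i,h) = {(1 : t : t^{2^i}) : t ∈ F_q} ∪ {(0 : 0 : 1)} in the projective plane PG(2,q) is an oval with nucleus (0 : 1 : 0); that is, every line of PG(2,q) meets O(i,h) in at most 2 points, and through each point of O(i,h) there is exactly one tangent line (meeting O(i,h) in only that point), all tangent lines passing through (0:1:0). -/

import Mathlib

section SegreAux

/-- If `gcd(i,h) = 1` then `2^h - 1` and `2^i - 1` are coprime. -/
lemma SegreAux.two_pow_coprime {i h : ℕ} (hgcd : Nat.gcd i h = 1) :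
    Nat.Coprime (2 ^ h - 1) (2 ^ i - 1) := by
  set d := Nat.gcd (2 ^ h - 1) (2 ^ i - 1) with hd
  have h2i : (2 : ZMod d) ^ i = 1 := by
    have h0 : ((2 ^ i - 1 : ℕ) : ZMod d) = 0 :=
      (ZMod.natCast_eq_zero_iff _ _).mpr (Nat.gcd_dvd_right _ _)
    have h1 : (1 : ℕ) ≤ 2 ^ i := Nat.one_le_two_pow
    rw [Nat.cast_sub h1] at h0
    push_cast at h0
    linear_combination h0
  have h2h : (2 : ZMod d) ^ h = 1 := by
    have h0 : ((2 ^ h - 1 : ℕ) : ZMod d) = 0 :=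
      (ZMod.natCast_eq_zero_iff _ _).mpr (Nat.gcd_dvd_left _ _)
    have h1 : (1 : ℕ) ≤ 2 ^ h := Nat.one_le_two_pow
    rw [Nat.cast_sub h1] at h0
    push_cast at h0
    linear_combination h0
  have ho : orderOf (2 : ZMod d) ∣ 1 := by
    have := Nat.dvd_gcd (orderOf_dvd_of_pow_eq_one h2i) (orderOf_dvd_of_pow_eq_one h2h)
    rwa [hgcd] at this
  have h21 : (2 : ZMod d) = 1 := orderOf_eq_one_iff.mp (Nat.dvd_one.mp ho)
  have h10 : ((1 : ℕ) : ZMod d) = 0 := by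
    push_cast
    linear_combination h21
  exact Nat.dvd_one.mp ((ZMod.natCast_eq_zero_iff _ _).mp h10)

lemma SegreAux.gf_card_units {h : ℕ} (hh : 0 < h) :
    Nat.card (GaloisField 2 h)ˣ = 2 ^ h - 1 := by
  rw [Nat.card_units, GaloisField.card 2 h hh.ne']

/-- The `(2^i - 1)`-st power map as a bijection of the unit group. -/
noncomputable def SegreAux.segreEquiv {i h : ℕ} (hh : 0 < h) (hgcd : Nat.gcd i h = 1) :
    (GaloisField 2 h)ˣ ≃ (GaloisField 2 h)ˣ :=
  powCoprime (n := 2 ^ i - 1) (by rw [gf_card_units hh]; exact two_pow_coprime hgcd)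

lemma SegreAux.segre_inj {i h : ℕ} (hh : 0 < h) (hgcd : Nat.gcd i h = 1)
    {u v : GaloisField 2 h} (hu : u ≠ 0) (hv : v ≠ 0)
    (huv : u ^ (2 ^ i - 1) = v ^ (2 ^ i - 1)) : u = v := by
  have := (segreEquiv hh hgcd (i := i)).injective (a₁ := Units.mk0 u hu) (a₂ := Units.mk0 v hv)
    (by ext; simpa [segreEquiv, powCoprime] using huv)
  simpa [Units.ext_iff] using this

lemma SegreAux.segre_surj {i h : ℕ} (hh : 0 < h) (hgcd : Nat.gcd i h = 1)
    {r : GaloisField 2 h} (hr : r ≠ 0) :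
    ∃ u : GaloisField 2 h, u ≠ 0 ∧ u ^ (2 ^ i - 1) = r := by
  obtain ⟨u, hu⟩ := (segreEquiv hh hgcd (i := i)).surjective (Units.mk0 r hr)
  exact ⟨u, u.ne_zero, by simpa [segreEquiv, powCoprime, Units.ext_iff] using hu⟩

/-- Injectivity of the Frobenius power map. -/
lemma SegreAux.frob_inj {i h : ℕ} {u v : GaloisField 2 h}
    (huv : u ^ 2 ^ i = v ^ 2 ^ i) : u = v := by
  have h0 : (u - v) ^ 2 ^ i = 0 := by
    rw [sub_pow_char_pow, huv, sub_self]
  have := pow_eq_zero_iff (n := 2 ^ i) (pow_ne_zero i two_ne_zero) |>.mp h0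
  exact sub_eq_zero.mp this

/-- Evaluating a linear functional on `Fin 3 → F` via its coefficients. -/
lemma SegreAux.phi_eval {h : ℕ}
    (φ : (Fin 3 → GaloisField 2 h) →ₗ[GaloisField 2 h] GaloisField 2 h)
    (x : Fin 3 → GaloisField 2 h) :
    φ x = x 0 * φ ![1, 0, 0] + x 1 * φ ![0, 1, 0] + x 2 * φ ![0, 0, 1] := by
  have e0 : (fun j => if (0 : Fin 3) = j then (1 : GaloisField 2 h) else 0) = ![1, 0, 0] := by
    funext j; fin_cases j <;> simp
  have e1 : (fun j => if (1 : Fin 3) = j then (1 : GaloisField 2 h) else 0) = ![0, 1, 0] := by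
    funext j; fin_cases j <;> simp [Fin.ext_iff]
  have e2 : (fun j => if (2 : Fin 3) = j then (1 : GaloisField 2 h) else 0) = ![0, 0, 1] := by
    funext j; fin_cases j <;> simp [Fin.ext_iff]
  rw [LinearMap.pi_apply_eq_sum_univ, Fin.sum_univ_three, e0, e1, e2]
  simp [smul_eq_mul]

lemma SegreAux.phi_eq_zero {h : ℕ}
    (φ : (Fin 3 → GaloisField 2 h) →ₗ[GaloisField 2 h] GaloisField 2 h)
    (ha : φ ![1, 0, 0] = 0) (hb : φ ![0, 1, 0] = 0) (hc : φ ![0, 0, 1] = 0) : φ = 0 := by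
  apply LinearMap.ext
  intro x
  rw [SegreAux.phi_eval φ x, ha, hb, hc]
  simp

/-- The slope relation: two distinct points on a line give `b = (t-s)^{2^i-1} c`. -/
lemma SegreAux.slope {i h : ℕ} {a b c t s : GaloisField 2 h} (hts : t ≠ s)
    (h1 : a + t * b + t ^ 2 ^ i * c = 0) (h2 : a + s * b + s ^ 2 ^ i * c = 0) :
    b = (t - s) ^ (2 ^ i - 1) * c := by
  have hms : t - s ≠ 0 := sub_ne_zero.mpr hts
  have hsub : (t - s) ^ 2 ^ i = t ^ 2 ^ i - s ^ 2 ^ i := sub_pow_char_pow t s i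
  have key : (t - s) * b = (t - s) ^ 2 ^ i * c := by
    have hneg : -((t - s) ^ 2 ^ i * c) = (t - s) ^ 2 ^ i * c := CharTwo.neg_eq _
    rw [← hneg]
    linear_combination h1 - h2 + c * hsub
  have hsplit : (2 : ℕ) ^ i = 1 + (2 ^ i - 1) := by
    have : (1 : ℕ) ≤ 2 ^ i := Nat.one_le_two_pow
    omega
  rw [hsplit, pow_add, pow_one, mul_assoc] at key
  exact mul_left_cancel₀ hms key

/-- Three distinct roots are impossible when `c ≠ 0`. -/
lemma SegreAux.three_roots {i h : ℕ} (hh : 0 < h) (hgcd : Nat.gcd i h = 1)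
    {a b c t s r : GaloisField 2 h} (hc : c ≠ 0)
    (h1 : a + t * b + t ^ 2 ^ i * c = 0) (h2 : a + s * b + s ^ 2 ^ i * c = 0)
    (h3 : a + r * b + r ^ 2 ^ i * c = 0) : t = s ∨ s = r ∨ t = r := by
  by_contra hcon
  push_neg at hcon
  obtain ⟨hts, hsr, htr⟩ := hcon
  have k1 : b = (t - s) ^ (2 ^ i - 1) * c := SegreAux.slope hts h1 h2
  have k2 : b = (t - r) ^ (2 ^ i - 1) * c := SegreAux.slope htr h1 h3
  have : (t - s) ^ (2 ^ i - 1) = (t - r) ^ (2 ^ i - 1) :=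
    mul_right_cancel₀ hc (k1 ▸ k2)
  have := SegreAux.segre_inj hh hgcd (sub_ne_zero.mpr hts) (sub_ne_zero.mpr htr) this
  exact hsr (by linear_combination -this)

end SegreAux

/-- The Segre oval `O(i,h) = {(1 : t : t^{2^i}) : t ∈ F_q} ∪ {(0 : 0 : 1)}` in `PG(2,q)`,
`q = 2^h`, with points given by (normalized) homogeneous coordinate vectors. -/
def SegreOval (i h : ℕ) : Set (Fin 3 → GaloisField 2 h) :=
  {x | (∃ t : GaloisField 2 h, x = ![1, t, t ^ 2 ^ i]) ∨ x = ![0, 0, 1]}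

/-- Segre: for `gcd(i,h) = 1` and `q = 2^h`, the set `O(i,h)` is an oval of
`PG(2,q)` with nucleus `(0 : 1 : 0)`: (1) every line (kernel of a nonzero linear functional)
meets `O(i,h)` in at most two points; (2) a line through a point `x` of `O(i,h)` is tangent
(meets `O(i,h)` only in `x`) if and only if it passes through the nucleus `(0:1:0)`; and
(3) through every point of `O(i,h)` there is a tangent line (so exactly one, the line joining
the point to the nucleus). -/
theorem stmt14 (i h : ℕ) (hi : 0 < i) (hh : 0 < h) (hgcd : Nat.gcd i h = 1) :
    (∀ φ : (Fin 3 → GaloisField 2 h) →ₗ[GaloisField 2 h] GaloisField 2 h, φ ≠ 0 →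
      ∀ x ∈ SegreOval i h, ∀ y ∈ SegreOval i h, ∀ z ∈ SegreOval i h,
        φ x = 0 → φ y = 0 → φ z = 0 → x = y ∨ y = z ∨ x = z) ∧
    (∀ x ∈ SegreOval i h,
      ∀ φ : (Fin 3 → GaloisField 2 h) →ₗ[GaloisField 2 h] GaloisField 2 h, φ ≠ 0 →
        φ x = 0 →
        ((∀ y ∈ SegreOval i h, φ y = 0 → y = x) ↔ φ ![0, 1, 0] = 0)) ∧
    (∀ x ∈ SegreOval i h,
      ∃ φ : (Fin 3 → GaloisField 2 h) →ₗ[GaloisField 2 h] GaloisField 2 h, φ ≠ 0 ∧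
        φ x = 0 ∧ φ ![0, 1, 0] = 0) := by
  have hP : ∀ (φ : (Fin 3 → GaloisField 2 h) →ₗ[GaloisField 2 h] GaloisField 2 h)
      (t : GaloisField 2 h),
      φ ![1, t, t ^ 2 ^ i] = φ ![1,0,0] + t * φ ![0,1,0] + t ^ 2 ^ i * φ ![0,0,1] := by
    intro φ t
    rw [SegreAux.phi_eval φ ![1, t, t ^ 2 ^ i]]
    simp [mul_comm]
  -- equality of point vectors
  have hveq : ∀ {t s : GaloisField 2 h}, t = s →
      (![1, t, t ^ 2 ^ i] : Fin 3 → GaloisField 2 h) = ![1, s, s ^ 2 ^ i] := by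
    rintro t s rfl; rfl
  have hvne : ∀ t : GaloisField 2 h,
      (![1, t, t ^ 2 ^ i] : Fin 3 → GaloisField 2 h) ≠ ![0, 0, 1] := by
    intro t hcon
    have := congrFun hcon 0
    simp at this
  -- case c = 0: two points on the line have equal parameters
  have hc0 : ∀ (φ : (Fin 3 → GaloisField 2 h) →ₗ[GaloisField 2 h] GaloisField 2 h), φ ≠ 0 →
      φ ![0,0,1] = 0 → ∀ t s : GaloisField 2 h,
      φ ![1, t, t ^ 2 ^ i] = 0 → φ ![1, s, s ^ 2 ^ i] = 0 → t = s := by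
    intro φ hφ hc t s ht hs
    rw [hP, hc] at ht hs
    by_cases hb : φ ![0,1,0] = 0
    · exfalso
      apply hφ
      apply SegreAux.phi_eq_zero φ _ hb hc
      rw [hb] at ht
      linear_combination ht
    · have : (t - s) * φ ![0,1,0] = 0 := by linear_combination ht - hs
      have := mul_eq_zero.mp this
      rcases this with h' | h'
      · exact sub_eq_zero.mp h'
      · exact absurd h' hb
  refine ⟨?_, ?_, ?_⟩
  · -- Part 1: no three collinear
    intro φ hφ x hx y hy z hz hfx hfy hfz
    rcases hx with ⟨t, rfl⟩ | rfl <;> rcases hy with ⟨s, rfl⟩ | rfl <;>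
      rcases hz with ⟨r, rfl⟩ | rfl
    · by_cases hc : φ ![0,0,1] = 0
      · exact Or.inl (hveq (hc0 φ hφ hc t s hfx hfy))
      · have e1 := hP φ t; rw [hfx] at e1
        have e2 := hP φ s; rw [hfy] at e2
        have e3 := hP φ r; rw [hfz] at e3
        rcases SegreAux.three_roots (t := t) (s := s) (r := r) (a := φ ![1,0,0])
            (b := φ ![0,1,0]) (c := φ ![0,0,1]) hh hgcd hc e1.symm e2.symm e3.symm
            with h' | h' | h'
        · exact Or.inl (hveq h')
        · exact Or.inr (Or.inl (hveq h'))
        · exact Or.inr (Or.inr (hveq h'))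
    · exact Or.inl (hveq (hc0 φ hφ hfz t s hfx hfy))
    · exact Or.inr (Or.inr (hveq (hc0 φ hφ hfy t r hfx hfz)))
    · exact Or.inr (Or.inl rfl)
    · exact Or.inr (Or.inl (hveq (hc0 φ hφ hfx s r hfy hfz)))
    · exact Or.inr (Or.inr rfl)
    · exact Or.inl rfl
    · exact Or.inl rfl
  · -- Part 2: tangent iff through nucleus
    rintro x (⟨t, rfl⟩ | rfl) φ hφ hfx
    · have e1 := hP φ t; rw [hfx] at e1
      constructor
      · intro htang
        by_contra hb
        by_cases hc : φ ![0,0,1] = 0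
        · exact hvne t (htang ![0,0,1] (Or.inr rfl) hc).symm
        · obtain ⟨u, hu0, hue⟩ := SegreAux.segre_surj hh hgcd
            (div_ne_zero hb hc) (i := i)
          have hs : φ ![1, t + u, (t + u) ^ 2 ^ i] = 0 := by
            rw [hP]
            have hadd : (t + u) ^ 2 ^ i = t ^ 2 ^ i + u ^ 2 ^ i := add_pow_char_pow t u 2 i
            have hsplit : (2 : ℕ) ^ i = 1 + (2 ^ i - 1) := by
              have : (1 : ℕ) ≤ 2 ^ i := Nat.one_le_two_pow
              omega
            have hue' : u ^ 2 ^ i * φ ![0,0,1] = u * φ ![0,1,0] := by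
              rw [hsplit, pow_add, pow_one, mul_assoc, hue, div_mul_cancel₀ _ hc]
            rw [hadd]
            have hself : u * φ ![0,1,0] + u * φ ![0,1,0] = 0 := CharTwo.add_self_eq_zero _
            linear_combination -e1 + hue' + hself
          have := htang _ (Or.inl ⟨t + u, rfl⟩) hs
          have := congrFun this 1
          simp at this
          exact hu0 (by linear_combination this)
      · intro hb y hy hfy
        have hc : φ ![0,0,1] ≠ 0 := by
          intro hc
          apply hφ
          apply SegreAux.phi_eq_zero φ _ hb hc
          rw [hb, hc] at e1
          linear_combination -e1
        rcases hy with ⟨s, rfl⟩ | rfl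
        · have e2 := hP φ s; rw [hfy] at e2
          rw [hb] at e1 e2
          have : (s ^ 2 ^ i - t ^ 2 ^ i) * φ ![0,0,1] = 0 := by linear_combination e1 - e2
          rcases mul_eq_zero.mp this with h' | h'
          · exact hveq (SegreAux.frob_inj (sub_eq_zero.mp h'))
          · exact absurd h' hc
        · exact absurd hfy hc
    · -- x = (0,0,1), so c = 0
      constructor
      · intro htang
        by_contra hb
        have hs : φ ![1, φ ![1,0,0] / φ ![0,1,0],
            (φ ![1,0,0] / φ ![0,1,0]) ^ 2 ^ i] = 0 := by
          rw [hP, hfx, div_mul_cancel₀ _ hb]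
          have := CharTwo.add_self_eq_zero (φ ![1,0,0])
          linear_combination this
        exact hvne _ (htang _ (Or.inl ⟨_, rfl⟩) hs)
      · intro hb y hy hfy
        have ha : φ ![1,0,0] ≠ 0 := fun ha => hφ (SegreAux.phi_eq_zero φ ha hb hfx)
        rcases hy with ⟨s, rfl⟩ | rfl
        · exfalso
          rw [hP, hb, hfx] at hfy
          apply ha
          linear_combination hfy
        · rfl
  · -- Part 3: existence of tangent lines
    rintro x (⟨t, rfl⟩ | rfl)
    · refine ⟨t ^ 2 ^ i • LinearMap.proj 0 + LinearMap.proj 2, ?_, ?_, ?_⟩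
      · intro h0
        have := LinearMap.ext_iff.mp h0 ![0, 0, 1]
        simp [LinearMap.proj_apply] at this
      · simp [LinearMap.proj_apply, CharTwo.add_self_eq_zero]
      · simp [LinearMap.proj_apply]
    · refine ⟨LinearMap.proj 0, ?_, ?_, ?_⟩
      · intro h0
        have := LinearMap.ext_iff.mp h0 ![1, 0, 0]
        simp [LinearMap.proj_apply] at this
      · simp [LinearMap.proj_apply]
      · simp [LinearMap.proj_apply]
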